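/- Let f : S¹ → S¹ be a homeomorphism with no periodic point, and suppose there exist a nondegenerate interval J ⊂ S¹, an integer a ≥ 1, and a sequence of pairwise disjoint nondegenerate intervals J_i ⊂ J, i ∈ ℕ, with f^a(J_i) = J_{i+1} and the J_i ordered monotonically in J. Then f^a has a fixed point in the closure of J, a contradiction; hence no such configuration exists. -/
import Mathlib


/-- The circle, as `ℝ/ℤ`. -/
abbrev S1 : Type := AddCircle (1 : ℝ)

/-- A circle homeomorphism is orientation preserving if it has a continuous strictly
monotone increasing lift commuting with the deck translation `x ↦ x + 1`. -/
def OrientationPreserving (f : S1 ≃ₜ S1) : Prop :=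
  ∃ F : ℝ → ℝ, StrictMono F ∧ Continuous F ∧ (∀ x : ℝ, F (x + 1) = F x + 1) ∧
    ∀ x : ℝ, f ((x : ℝ) : S1) = ((F x : ℝ) : S1)

/-- The `k`-th iterate of a homeomorphism, for `k : ℤ`. -/
noncomputable def zIter (f : S1 ≃ₜ S1) (k : ℤ) : S1 → S1 :=
  if 0 ≤ k then (⇑f)^[k.toNat] else (⇑f.symm)^[(-k).toNat]

/-- `f` has no periodic point. -/
def NoPeriodicPoint (f : S1 ≃ₜ S1) : Prop :=
  ∀ (x : S1) (n : ℕ), 1 ≤ n → (⇑f)^[n] x ≠ x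

/-- `x` is a nonwandering point of `f`: every neighborhood `U` of `x` meets `f^k(U)`
for some nonzero integer `k`. -/
def IsNonwandering (f : S1 ≃ₜ S1) (x : S1) : Prop :=
  ∀ U ∈ nhds x, ∃ k : ℤ, k ≠ 0 ∧ (zIter f k '' U ∩ U).Nonempty

/-- The nonwandering set `Ω(f)`. -/
def nonwanderingSet (f : S1 ≃ₜ S1) : Set S1 := {x | IsNonwandering f x}

/-- The ω-limit set of the orbit of `x`. -/
def omegaSet (f : S1 ≃ₜ S1) (x : S1) : Set S1 :=
  ⋂ n : ℕ, closure {y | ∃ k ≥ n, (⇑f)^[k] x = y}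

/-- The α-limit set of the orbit of `x`. -/
def alphaSet (f : S1 ≃ₜ S1) (x : S1) : Set S1 :=
  ⋂ n : ℕ, closure {y | ∃ k ≥ n, (⇑f.symm)^[k] x = y}

/-- for a circle homeomorphism `f` with no periodic point there is no
nondegenerate interval `J` (here the projection of `[u,v]` with `u < v < u + 1`),
integer `a ≥ 1`, and monotonically ordered sequence of pairwise disjoint nondegenerate
subintervals `J_i ⊆ J` with `f^a(J_i) = J_{i+1}`: such a configuration would force a
fixed point of `f^a` in the closure of `J`. -/
theorem no_translated_interval_sequence (f : S1 ≃ₜ S1) (hnp : NoPeriodicPoint f)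
    (u v : ℝ) (huv : u < v) (hv1 : v < u + 1) (a : ℕ) (ha : 1 ≤ a)
    (p q : ℕ → ℝ)
    (hsub : ∀ i, u ≤ p i ∧ p i < q i ∧ q i ≤ v)
    (hmono : (∀ i, q i < p (i + 1)) ∨ (∀ i, q (i + 1) < p i))
    (hdisj : ∀ i j, i ≠ j →
      Disjoint ((fun t : ℝ => ((t : ℝ) : S1)) '' Set.Ioo (p i) (q i))
        ((fun t : ℝ => ((t : ℝ) : S1)) '' Set.Ioo (p j) (q j)))
    (hmap : ∀ i, (⇑f)^[a] '' ((fun t : ℝ => ((t : ℝ) : S1)) '' Set.Ioo (p i) (q i)) =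
      (fun t : ℝ => ((t : ℝ) : S1)) '' Set.Ioo (p (i + 1)) (q (i + 1))) :
    False := by
  classical
  set e : ℝ → S1 := fun t => ((t : ℝ) : S1) with he
  have hecont : Continuous e := continuous_quotient_mk'
  set m : ℕ → ℝ := fun i => (p i + q i) / 2 with hm
  have hmmem : ∀ i, m i ∈ Set.Ioo (p i) (q i) := by
    intro i
    obtain ⟨_, h2, _⟩ := hsub i
    constructor <;> simp [hm] <;> linarith
  have himg : ∀ i, (⇑f)^[a] (e (m i)) ∈ e '' Set.Ioo (p (i+1)) (q (i+1)) := by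
    intro i
    rw [← hmap i]
    exact Set.mem_image_of_mem _ (Set.mem_image_of_mem _ (hmmem i))
  choose t ht hte using himg
  -- both p and q tend to a common limit L
  obtain ⟨L, hpL, hqL⟩ : ∃ L, Filter.Tendsto p Filter.atTop (nhds L) ∧
      Filter.Tendsto q Filter.atTop (nhds L) := by
    rcases hmono with hmono | hmono
    · have hmonop : Monotone p := by
        apply (strictMono_nat_of_lt_succ ?_).monotone
        intro i
        exact lt_trans (hsub i).2.1 (hmono i)
      have hbdd : BddAbove (Set.range p) := by
        refine ⟨v, ?_⟩
        rintro x ⟨i, rfl⟩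
        exact le_trans (hsub i).2.1.le (hsub i).2.2
      refine ⟨⨆ i, p i, tendsto_atTop_ciSup hmonop hbdd, ?_⟩
      have h1 : Filter.Tendsto (fun i => p (i + 1)) Filter.atTop (nhds (⨆ i, p i)) :=
        (tendsto_atTop_ciSup hmonop hbdd).comp (Filter.tendsto_add_atTop_nat 1)
      exact tendsto_of_tendsto_of_tendsto_of_le_of_le
        (tendsto_atTop_ciSup hmonop hbdd) h1
        (fun i => (hsub i).2.1.le) (fun i => (hmono i).le)
    · have hantip : Antitone p := by
        apply (strictAnti_nat_of_succ_lt ?_).antitone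
        intro i
        exact lt_trans (hsub (i+1)).2.1 (hmono i)
      have hbdd : BddBelow (Set.range p) := by
        refine ⟨u, ?_⟩
        rintro x ⟨i, rfl⟩
        exact (hsub i).1
      have hpL : Filter.Tendsto p Filter.atTop (nhds (⨅ i, p i)) :=
        tendsto_atTop_ciInf hantip hbdd
      refine ⟨⨅ i, p i, hpL, ?_⟩
      rw [← Filter.tendsto_add_atTop_iff_nat 1]
      have h1 : Filter.Tendsto (fun i => p (i + 1)) Filter.atTop (nhds (⨅ i, p i)) :=
        hpL.comp (Filter.tendsto_add_atTop_nat 1)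
      exact tendsto_of_tendsto_of_tendsto_of_le_of_le h1 hpL
        (fun i => (hsub (i+1)).2.1.le) (fun i => (hmono i).le)
  have hmL : Filter.Tendsto m Filter.atTop (nhds L) := by
    have := (hpL.add hqL).div_const 2
    simpa [hm] using this
  have htL : Filter.Tendsto t Filter.atTop (nhds L) := by
    have h1 : Filter.Tendsto (fun i => p (i + 1)) Filter.atTop (nhds L) :=
      hpL.comp (Filter.tendsto_add_atTop_nat 1)
    have h2 : Filter.Tendsto (fun i => q (i + 1)) Filter.atTop (nhds L) :=
      hqL.comp (Filter.tendsto_add_atTop_nat 1)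
    exact tendsto_of_tendsto_of_tendsto_of_le_of_le h1 h2
      (fun i => (ht i).1.le) (fun i => (ht i).2.le)
  have hfa : Continuous ((⇑f)^[a]) := f.continuous.iterate a
  have hlim1 : Filter.Tendsto (fun i => (⇑f)^[a] (e (m i))) Filter.atTop
      (nhds ((⇑f)^[a] (e L))) :=
    (hfa.tendsto _).comp ((hecont.tendsto _).comp hmL)
  have hlim2 : Filter.Tendsto (fun i => (⇑f)^[a] (e (m i))) Filter.atTop (nhds (e L)) := by
    have : (fun i => (⇑f)^[a] (e (m i))) = fun i => e (t i) := by
      funext i; exact (hte i).symm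
    rw [this]
    exact (hecont.tendsto _).comp htL
  exact hnp (e L) a ha (tendsto_nhds_unique hlim1 hlim2)
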